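/- Let $m_1,\dots,m_n$ be nonnegative real numbers with $M = \max_i m_i = 1$, and let $l$ be the number of indices $i$ with $m_i = 1$. Then there exist constants $C, C' > 0$ such that for all sufficiently small $\delta \in (0,1)$, $C\,|\ln\delta|^{l}\,\delta \le \int_{\{x \in (0,1)^n : \delta/(x_1^{m_1}\cdots x_n^{m_n}) < 1\}} \frac{\delta}{x_1^{m_1}\cdots x_n^{m_n}}\,dx \le C'\,|\ln\delta|^{l}\,\delta$. -/

import Mathlib

open MeasureTheory Set

lemma indic_prod {n : ℕ} (f : Fin n → ℝ → ℝ) (s : Fin n → Set ℝ) (x : Fin n → ℝ) :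
    (Set.pi univ s).indicator (fun x => ∏ i, f i (x i)) x
      = ∏ i, (s i).indicator (f i) (x i) := by
  by_cases h : x ∈ Set.pi univ s
  · rw [Set.indicator_of_mem h]
    exact Finset.prod_congr rfl fun i _ => (Set.indicator_of_mem (h i (Set.mem_univ i)) _).symm
  · rw [Set.indicator_of_notMem h]
    rw [Set.mem_pi] at h
    push_neg at h
    obtain ⟨i, hi, hni⟩ := h
    exact (Finset.prod_eq_zero (Finset.mem_univ i)
      (by rw [Set.indicator_of_notMem hni])).symm

lemma pi_integrableOn {n : ℕ} (f : Fin n → ℝ → ℝ) (s : Fin n → Set ℝ)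
    (hs : ∀ i, MeasurableSet (s i)) (hf : ∀ i, IntegrableOn (f i) (s i)) :
    IntegrableOn (fun x : Fin n → ℝ => ∏ i, f i (x i)) (Set.pi univ s) := by
  rw [← integrable_indicator_iff (MeasurableSet.univ_pi hs)]
  have : (Set.pi univ s).indicator (fun x : Fin n → ℝ => ∏ i, f i (x i))
      = fun x => ∏ i, (s i).indicator (f i) (x i) := funext (indic_prod f s)
  rw [this]
  exact Integrable.fintype_prod (E := ℝ) fun i =>
    (integrable_indicator_iff (hs i)).2 (hf i)

lemma pi_setIntegral {n : ℕ} (f : Fin n → ℝ → ℝ) (s : Fin n → Set ℝ)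
    (hs : ∀ i, MeasurableSet (s i)) :
    ∫ x : Fin n → ℝ in Set.pi univ s, ∏ i, f i (x i) = ∏ i, ∫ t in s i, f i t := by
  rw [← integral_indicator (MeasurableSet.univ_pi hs)]
  have : (Set.pi univ s).indicator (fun x : Fin n → ℝ => ∏ i, f i (x i))
      = fun x => ∏ i, (s i).indicator (f i) (x i) := funext (indic_prod f s)
  rw [this, integral_fintype_prod_volume_eq_prod (f := fun i => (s i).indicator (f i))]
  exact Finset.prod_congr rfl fun i _ => integral_indicator (hs i)

lemma rpow_intOn (r : ℝ) (hr : -1 < r) : IntegrableOn (fun t : ℝ => t ^ r) (Ioo 0 1) := by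
  have h := intervalIntegral.intervalIntegrable_rpow' (a := (0:ℝ)) (b := 1) hr
  rwa [intervalIntegrable_iff_integrableOn_Ioo_of_le (by norm_num)] at h

lemma rpow_val (r : ℝ) (hr : -1 < r) : ∫ t in Ioo (0:ℝ) 1, t ^ r = 1/(r+1) := by
  rw [← integral_Ioc_eq_integral_Ioo, ← intervalIntegral.integral_of_le (by norm_num : (0:ℝ) ≤ 1),
    integral_rpow (Or.inl hr), Real.one_rpow, Real.zero_rpow (by linarith), one_div]
  ring

lemma inv_intOn (b : ℝ) (hb : 0 < b) (hb1 : b < 1) :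
    IntegrableOn (fun t : ℝ => t ^ (-1:ℝ)) (Ioo b 1) := by
  have h : IntervalIntegrable (fun t : ℝ => t⁻¹) volume b 1 :=
    intervalIntegral.intervalIntegrable_inv (fun x hx => by
      rcases Set.mem_uIcc.1 hx with ⟨h1,_⟩|⟨h1,_⟩ <;> nlinarith) (by fun_prop)
  rw [intervalIntegrable_iff_integrableOn_Ioo_of_le hb1.le] at h
  simpa only [Real.rpow_neg_one] using h

lemma inv_val (b : ℝ) (hb : 0 < b) (hb1 : b < 1) :
    ∫ t in Ioo b 1, t ^ (-1:ℝ) = -Real.log b := by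
  simp only [Real.rpow_neg_one]
  rw [← integral_Ioc_eq_integral_Ioo, ← intervalIntegral.integral_of_le hb1.le,
    integral_inv (by rw [Set.uIcc_of_le hb1.le]; rintro ⟨h1,_⟩; exact absurd h1 (by linarith))]
  rw [Real.log_div one_ne_zero (ne_of_gt hb), Real.log_one]; ring

lemma one_intOn (b : ℝ) : IntegrableOn (fun _ : ℝ => (1:ℝ)) (Ioo b 1) :=
  integrableOn_const measure_Ioo_lt_top.ne

lemma one_val (b : ℝ) (hb : 0 ≤ b) (hb1 : b ≤ 1) : ∫ _ in Ioo b 1, (1:ℝ) = 1 - b := by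
  simp [hb1, Real.volume_Ioo, ENNReal.toReal_ofReal (by linarith : (0:ℝ) ≤ 1 - b)]

set_option maxHeartbeats 1000000 in
/-- Lemma 3.1(c): when `M = max m i = 1` and `l` of the `m i` equal `1`, the integral of
`δ / x^m` over the region of the unit cube where `δ / x^m < 1` is comparable to
`|ln δ|^l · δ` for sufficiently small `δ`. -/
theorem stmt2 {n : ℕ} (m : Fin n → ℝ) (hm : ∀ i, 0 ≤ m i)
    (M : ℝ) (hM : IsGreatest (Set.range m) M) (hM1 : M = 1)
    (l : ℕ) (hl : l = {i : Fin n | m i = 1}.ncard) :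
    ∃ C C' : ℝ, 0 < C ∧ 0 < C' ∧ ∃ δ₀ : ℝ, 0 < δ₀ ∧ δ₀ < 1 ∧ ∀ δ : ℝ, 0 < δ → δ < δ₀ →
      C * |Real.log δ| ^ l * δ ≤ (∫ x in {x : Fin n → ℝ | (∀ i, x i ∈ Set.Ioo (0:ℝ) 1) ∧
                  δ / ∏ i, x i ^ m i < 1}, δ / ∏ i, x i ^ m i) ∧
      (∫ x in {x : Fin n → ℝ | (∀ i, x i ∈ Set.Ioo (0:ℝ) 1) ∧
                  δ / ∏ i, x i ^ m i < 1}, δ / ∏ i, x i ^ m i) ≤ C' * |Real.log δ| ^ l * δ := by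
  classical
  have hm1 : ∀ i, m i ≤ 1 := by
    intro i
    have := hM.2 (Set.mem_range_self i)
    rw [hM1] at this; exact this
  set T : Finset (Fin n) := Finset.univ.filter (fun i => m i = 1) with hT
  have hlT : l = T.card := by
    rw [hl]
    have : {i : Fin n | m i = 1} = ↑T := by ext i; simp [hT]
    rw [this, Set.ncard_coe_finset]
  have hln : l ≤ n := by
    rw [hlT]
    simpa using Finset.card_filter_le Finset.univ (fun i => m i = 1)
  set lam : ℕ := max l 1 with hlam
  have hlam1 : 1 ≤ lam := le_max_right _ _
  refine ⟨(1/2)^n * (1/(2*(lam:ℝ)))^l,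
    Real.exp 1 * ∏ i ∈ Finset.univ.filter (fun i => ¬ m i = 1), (1 - m i)⁻¹,
    ?_, ?_, Real.exp (-(2*(n:ℝ)+2)), Real.exp_pos _, ?_, ?_⟩
  · have h1 : (0:ℝ) < (lam:ℝ) := by exact_mod_cast Nat.lt_of_lt_of_le Nat.zero_lt_one hlam1
    have h2 : (0:ℝ) < 1/(2*(lam:ℝ)) := by positivity
    have h3 : (0:ℝ) < ((1:ℝ)/2)^n := by positivity
    exact mul_pos h3 (pow_pos h2 l)
  · apply mul_pos (Real.exp_pos 1)
    apply Finset.prod_pos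
    intro i hi
    have : m i ≠ 1 := (Finset.mem_filter.1 hi).2
    have h2 : m i < 1 := lt_of_le_of_ne (hm1 i) this
    exact inv_pos.2 (by linarith)
  · refine Real.exp_lt_one_iff.2 ?_
    have : (0:ℝ) ≤ (n:ℝ) := Nat.cast_nonneg n
    linarith
  intro δ hδ hδ0
  set L : ℝ := -Real.log δ with hLdef
  have hlogδ : Real.log δ < -(2*(n:ℝ)+2) := by
    calc Real.log δ < Real.log (Real.exp (-(2*(n:ℝ)+2))) := Real.log_lt_log hδ hδ0
    _ = -(2*(n:ℝ)+2) := Real.log_exp _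
  have hL : 2*(n:ℝ)+2 < L := by rw [hLdef]; linarith
  have hL2 : (2:ℝ) < L := by
    have : (0:ℝ) ≤ 2*(n:ℝ) := by positivity
    linarith
  have hLpos : 0 < L := by linarith
  have habs : |Real.log δ| = L := by rw [hLdef, abs_of_neg (by linarith)]
  have hδ1 : δ < 1 := by
    refine lt_trans hδ0 (Real.exp_lt_one_iff.2 ?_)
    have : (0:ℝ) ≤ (n:ℝ) := Nat.cast_nonneg n
    linarith
  set a : ℝ := 1/L with ha
  have hapos : 0 < a := by positivity
  have ha1 : a < 1 := by rw [ha]; rw [div_lt_one hLpos]; linarith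
  -- the region
  set S0 : Set (Fin n → ℝ) := {x : Fin n → ℝ | (∀ i, x i ∈ Set.Ioo (0:ℝ) 1) ∧
      δ / ∏ i, x i ^ m i < 1} with hS0
  set cube : Set (Fin n → ℝ) := Set.pi univ (fun _ => Ioo (0:ℝ) 1) with hcube
  have hsubcube : S0 ⊆ cube := fun x hx i _ => hx.1 i
  set g : (Fin n → ℝ) → ℝ := fun x => δ / ∏ i, x i ^ m i with hg
  have hPpos : ∀ x ∈ cube, 0 < ∏ i, x i ^ m i := by
    intro x hx
    exact Finset.prod_pos fun i _ => Real.rpow_pos_of_pos (hx i (Set.mem_univ i)).1 _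
  have hgmeas : Measurable g := by
    apply Measurable.div measurable_const
    exact Finset.measurable_prod _ fun i _ => by fun_prop
  have hS0meas : MeasurableSet S0 := by
    have : S0 = cube ∩ (g ⁻¹' (Iio 1)) := by
      ext x; simp [hS0, hcube, hg, Set.mem_pi]
    rw [this]
    exact (MeasurableSet.univ_pi fun _ => measurableSet_Ioo).inter
      (hgmeas measurableSet_Iio)
  have hgnn : ∀ x ∈ S0, 0 ≤ g x := fun x hx =>
    div_nonneg hδ.le (hPpos x (hsubcube hx)).le
  have hglt1 : ∀ x ∈ S0, g x < 1 := fun x hx => hx.2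
  have hcubemeas : MeasurableSet cube := MeasurableSet.univ_pi fun _ => measurableSet_Ioo
  have hcubevol : volume cube < ⊤ := by
    rw [hcube, volume_pi_pi]
    simp [Real.volume_Ioo]
  have hfin : volume S0 < ⊤ := lt_of_le_of_lt (measure_mono hsubcube) hcubevol
  have hgint : IntegrableOn g S0 := by
    refine Integrable.mono' (integrableOn_const (C := (1:ℝ)) hfin.ne)
      hgmeas.aestronglyMeasurable.restrict ?_
    filter_upwards [ae_restrict_mem hS0meas] with x hx
    rw [Real.norm_eq_abs, abs_of_nonneg (hgnn x hx)]
    exact (hglt1 x hx).le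
  constructor
  · -- lower bound
    set ε : ℝ := ((2:ℝ)^n * δ) ^ ((1:ℝ)/(lam:ℝ)) with hε
    have hlamR : (0:ℝ) < (lam:ℝ) := by exact_mod_cast Nat.lt_of_lt_of_le Nat.zero_lt_one hlam1
    have h2n : (0:ℝ) < (2:ℝ)^n * δ := by positivity
    have h2nlt : (2:ℝ)^n * δ < 1/2 := by
      have e1 : (2:ℝ)^n ≤ Real.exp n := by
        calc (2:ℝ)^n ≤ (Real.exp 1)^n := by
              refine pow_le_pow_left₀ (by norm_num) ?_ n
              have := Real.add_one_le_exp (1:ℝ); linarith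
        _ = Real.exp n := by rw [← Real.exp_nat_mul]; ring_nf
      calc (2:ℝ)^n * δ < Real.exp n * Real.exp (-(2*(n:ℝ)+2)) :=
            mul_lt_mul' e1 hδ0 hδ.le (Real.exp_pos _)
      _ = Real.exp ((n:ℝ) - (2*(n:ℝ)+2)) := by rw [← Real.exp_add]; ring_nf
      _ ≤ Real.exp (-2) := by
            refine Real.exp_le_exp.2 ?_
            have : (0:ℝ) ≤ (n:ℝ) := Nat.cast_nonneg n
            linarith
      _ < 1/2 := by
            have h2e : (2:ℝ) < Real.exp 2 := by have := Real.add_one_le_exp (2:ℝ); linarith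
            rw [Real.exp_neg, inv_lt_comm₀ (Real.exp_pos 2) (by norm_num : (0:ℝ) < 1/2)]
            have h12 : ((1/2:ℝ))⁻¹ = 2 := by norm_num
            rw [h12]; exact h2e
    have hεpos : 0 < ε := Real.rpow_pos_of_pos h2n _
    have hε1 : ε < 1 := Real.rpow_lt_one h2n.le (by linarith) (by positivity)
    set b : Fin n → ℝ := fun i => if m i = 1 then ε else 1/2 with hb2
    have hbpos : ∀ i, 0 < b i := by
      intro i
      by_cases h : m i = 1
      · simp only [hb2, if_pos h]; exact hεpos
      · simp only [hb2, if_neg h]; norm_num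
    have hb1 : ∀ i, b i < 1 := by
      intro i
      by_cases h : m i = 1
      · simp only [hb2, if_pos h]; exact hε1
      · simp only [hb2, if_neg h]; norm_num
    set box : Set (Fin n → ℝ) := Set.pi univ (fun i => Ioo (b i) 1) with hbox
    have hboxmeas : MeasurableSet box := MeasurableSet.univ_pi fun _ => measurableSet_Ioo
    have hcardnot : (Finset.univ.filter (fun i => ¬ m i = 1)).card = n - l := by
      have := Finset.card_filter_add_card_filter_not (s := Finset.univ)
        (p := fun i : Fin n => m i = 1)
      simp only [Finset.card_univ, Fintype.card_fin] at this
      rw [hlT, hT]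
      omega
    have hprodb : ∏ i, b i = ε^l * (1/2:ℝ)^(n-l) := by
      rw [← Finset.prod_filter_mul_prod_filter_not Finset.univ (fun i => m i = 1) b]
      congr 1
      · rw [Finset.prod_congr rfl (fun i hi => if_pos (Finset.mem_filter.1 hi).2),
          Finset.prod_const, ← hT, ← hlT]
      · rw [Finset.prod_congr rfl (fun i hi => if_neg (Finset.mem_filter.1 hi).2),
          Finset.prod_const, hcardnot]
    have hδb : δ < ∏ i, b i := by
      rw [hprodb]
      by_cases hl0 : l = 0
      · have h2p : (0:ℝ) < (2:ℝ)^n := by positivity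
        simp only [hl0, pow_zero, one_mul, Nat.sub_zero]
        rw [div_pow, one_pow, lt_div_iff₀ h2p]
        nlinarith
      · have hllam : lam = l := by rw [hlam]; exact max_eq_left (Nat.one_le_iff_ne_zero.2 hl0)
        have hεl : ε^l = (2:ℝ)^n * δ := by
          rw [hε, ← Real.rpow_natCast (((2:ℝ)^n * δ) ^ ((1:ℝ)/(lam:ℝ))) l,
            ← Real.rpow_mul h2n.le]
          have : (1:ℝ)/(lam:ℝ) * (l:ℝ) = 1 := by
            rw [hllam]
            have : (l:ℝ) ≠ 0 := Nat.cast_ne_zero.2 hl0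
            field_simp
          rw [this, Real.rpow_one]
        rw [hεl]
        have hnl : l + (n - l) = n := Nat.add_sub_cancel' hln
        have hkey : (2:ℝ)^n * (1/2:ℝ)^(n-l) = 2^l := by
          calc (2:ℝ)^n * (1/2:ℝ)^(n-l) = (2:ℝ)^(l+(n-l)) * (1/2:ℝ)^(n-l) := by rw [hnl]
          _ = 2^l := by
            rw [pow_add, div_pow, one_pow, mul_assoc, mul_one_div,
              div_self (by positivity : ((2:ℝ)^(n-l)) ≠ 0), mul_one]
        have h2l : (2:ℝ) ≤ 2^l := by
          calc (2:ℝ) = 2^1 := (pow_one 2).symm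
          _ ≤ 2^l := pow_le_pow_right₀ (by norm_num) (Nat.one_le_iff_ne_zero.2 hl0)
        have : (2:ℝ)^n * δ * (1/2:ℝ)^(n-l) = δ * ((2:ℝ)^n * (1/2:ℝ)^(n-l)) := by ring
        rw [this, hkey]
        nlinarith
    have hboxsub : box ⊆ S0 := by
      intro x hx
      have hxi : ∀ i, x i ∈ Ioo (b i) 1 := fun i => hx i (Set.mem_univ i)
      have hxIoo : ∀ i, x i ∈ Ioo (0:ℝ) 1 := fun i =>
        ⟨lt_trans (hbpos i) (hxi i).1, (hxi i).2⟩
      refine ⟨hxIoo, ?_⟩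
      have hfac : ∀ i, b i ≤ x i ^ m i := by
        intro i
        by_cases hmi : m i = 1
        · have h2 : ε < x i := by simpa [hb2, hmi] using (hxi i).1
          simp only [hb2, if_pos hmi, hmi, Real.rpow_one]
          exact h2.le
        · simp only [hb2, if_neg hmi]
          have h1 : x i ≤ x i ^ m i := by
            have := Real.rpow_le_rpow_of_exponent_ge (hxIoo i).1 (hxIoo i).2.le (hm1 i)
            rwa [Real.rpow_one] at this
          have h2 : (1/2:ℝ) < x i := by
            have := (hxi i).1
            simpa [hb2, if_neg hmi] using this
          linarith
      have hPb : ∏ i, b i ≤ ∏ i, x i ^ m i :=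
        Finset.prod_le_prod (fun i _ => (hbpos i).le) (fun i _ => hfac i)
      have hP : 0 < ∏ i, x i ^ m i :=
        lt_of_lt_of_le (Finset.prod_pos fun i _ => hbpos i) hPb
      rw [div_lt_one hP]
      exact lt_of_lt_of_le hδb hPb
    set k : Fin n → ℝ → ℝ := fun i t => if m i = 1 then t ^ (-1:ℝ) else 1 with hk
    have hkint : ∀ i, IntegrableOn (k i) (Ioo (b i) 1) := by
      intro i; by_cases hmi : m i = 1
      · simp only [hk, hb2, if_pos hmi]; exact inv_intOn ε hεpos hε1
      · simp only [hk, hb2, if_neg hmi]; exact one_intOn _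
    have hkval : ∀ i, ∫ t in Ioo (b i) 1, k i t = if m i = 1 then -Real.log ε else 1/2 := by
      intro i; by_cases hmi : m i = 1
      · simp only [hk, hb2, if_pos hmi]; exact inv_val ε hεpos hε1
      · simp only [hk, hb2, if_neg hmi]
        rw [one_val (1/2) (by norm_num) (by norm_num)]; norm_num
    have hptl : ∀ x ∈ box, δ * ∏ i, k i (x i) ≤ g x := by
      intro x hx
      have hxi : ∀ i, x i ∈ Ioo (b i) 1 := fun i => hx i (Set.mem_univ i)
      have hxIoo : ∀ i, x i ∈ Ioo (0:ℝ) 1 := fun i =>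
        ⟨lt_trans (hbpos i) (hxi i).1, (hxi i).2⟩
      have hQpos : 0 < ∏ i ∈ T, x i :=
        Finset.prod_pos fun i _ => (hxIoo i).1
      have hQ : ∏ i, k i (x i) = (∏ i ∈ T, x i)⁻¹ := by
        rw [← Finset.prod_filter_mul_prod_filter_not Finset.univ (fun i => m i = 1)
          (fun i => k i (x i))]
        have e1 : ∏ i ∈ Finset.univ.filter (fun i => m i = 1), k i (x i)
            = ∏ i ∈ T, (x i)⁻¹ := by
          rw [← hT]
          refine Finset.prod_congr rfl fun i hi => ?_
          rw [hk]
          simp only [if_pos ((Finset.mem_filter.1 hi).2 : m i = 1)]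
          exact Real.rpow_neg_one _
        have e2 : ∏ i ∈ Finset.univ.filter (fun i => ¬ m i = 1), k i (x i) = 1 := by
          refine Finset.prod_eq_one fun i hi => ?_
          rw [hk]; simp only [if_neg ((Finset.mem_filter.1 hi).2 : ¬ m i = 1)]
        rw [e1, e2, mul_one, ← Finset.prod_inv_distrib]
      have hPQ : ∏ i, x i ^ m i ≤ ∏ i ∈ T, x i := by
        have h1 : ∏ i, x i ^ m i ≤ ∏ i, (if m i = 1 then x i else 1) := by
          refine Finset.prod_le_prod (fun i _ => Real.rpow_nonneg (hxIoo i).1.le _) ?_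
          intro i _
          by_cases hmi : m i = 1
          · rw [if_pos hmi, hmi, Real.rpow_one]
          · rw [if_neg hmi]
            exact Real.rpow_le_one (hxIoo i).1.le (hxIoo i).2.le (hm i)
        have h2 : ∏ i, (if m i = 1 then x i else 1) = ∏ i ∈ T, x i := by
          rw [hT, Finset.prod_filter]
        linarith
      have hPpos' : 0 < ∏ i, x i ^ m i :=
        Finset.prod_pos fun i _ => Real.rpow_pos_of_pos (hxIoo i).1 _
      have : δ * ∏ i, k i (x i) = δ / ∏ i ∈ T, x i := by
        rw [hQ, div_eq_mul_inv]
      rw [this]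
      exact div_le_div_of_nonneg_left hδ.le hPpos' hPQ
    have hkprodint : IntegrableOn (fun x : Fin n → ℝ => ∏ i, k i (x i)) box := by
      rw [hbox]
      exact pi_integrableOn k _ (fun _ => measurableSet_Ioo) hkint
    have hboxval : ∫ x in box, δ * ∏ i, k i (x i)
        = δ * ((-Real.log ε)^l * (1/2:ℝ)^(n-l)) := by
      rw [integral_const_mul, hbox, pi_setIntegral k _ (fun _ => measurableSet_Ioo)]
      congr 1
      rw [Finset.prod_congr rfl (fun i _ => hkval i),
        ← Finset.prod_filter_mul_prod_filter_not Finset.univ (fun i => m i = 1)]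
      congr 1
      · rw [Finset.prod_congr rfl (fun i hi => if_pos (Finset.mem_filter.1 hi).2),
          Finset.prod_const, ← hT, ← hlT]
      · rw [Finset.prod_congr rfl (fun i hi => if_neg (Finset.mem_filter.1 hi).2),
          Finset.prod_const, hcardnot]
    have hlogε : L/(2*(lam:ℝ)) ≤ -Real.log ε := by
      have hlε : Real.log ε = (1:ℝ)/(lam:ℝ) * Real.log ((2:ℝ)^n * δ) := by
        rw [hε, Real.log_rpow h2n]
      have hlog2n : Real.log ((2:ℝ)^n * δ) = (n:ℝ) * Real.log 2 + Real.log δ := by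
        rw [Real.log_mul (by positivity) hδ.ne', Real.log_pow]
      have hlog2 : Real.log 2 ≤ 1 := by
        have := Real.log_two_lt_d9; linarith
      have hnlog2 : (n:ℝ) * Real.log 2 ≤ L/2 - 1 := by
        have h1 : (n:ℝ) * Real.log 2 ≤ (n:ℝ) :=
          mul_le_of_le_one_right (Nat.cast_nonneg n) hlog2
        linarith
      have : -Real.log ε = (L - (n:ℝ)*Real.log 2)/(lam:ℝ) := by
        rw [hlε, hlog2n, hLdef]; field_simp; ring
      rw [this]
      rw [div_le_div_iff₀ (by positivity) hlamR]
      nlinarith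
    have hlogεpos : 0 < -Real.log ε := lt_of_lt_of_le (by positivity) hlogε
    have step1 : ∫ x in box, g x ≤ ∫ x in S0, g x := by
      refine setIntegral_mono_set hgint ?_ (HasSubset.Subset.eventuallyLE hboxsub)
      filter_upwards [ae_restrict_mem hS0meas] with x hx
      exact hgnn x hx
    have step2 : ∫ x in box, δ * ∏ i, k i (x i) ≤ ∫ x in box, g x :=
      setIntegral_mono_on (hkprodint.const_mul δ) (hgint.mono_set hboxsub)
        hboxmeas hptl
    calc ((1/2:ℝ)^n * (1/(2*(lam:ℝ)))^l) * |Real.log δ|^l * δ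
        ≤ δ * ((-Real.log ε)^l * (1/2:ℝ)^(n-l)) := by
          rw [habs]
          have e1 : (L/(2*(lam:ℝ)))^l ≤ (-Real.log ε)^l :=
            pow_le_pow_left₀ (by positivity) hlogε l
          have e2 : ((1/2:ℝ))^n ≤ ((1/2:ℝ))^(n-l) :=
            pow_le_pow_of_le_one (by norm_num) (by norm_num) (Nat.sub_le n l)
          have e3 : (1/(2*(lam:ℝ)))^l * L^l = (L/(2*(lam:ℝ)))^l := by
            rw [← mul_pow]; congr 1; field_simp
          calc ((1/2:ℝ)^n * (1/(2*(lam:ℝ)))^l) * L^l * δ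
              = δ * ((1/(2*(lam:ℝ)))^l * L^l * (1/2:ℝ)^n) := by ring
          _ = δ * ((L/(2*(lam:ℝ)))^l * (1/2:ℝ)^n) := by rw [e3]
          _ ≤ δ * ((-Real.log ε)^l * (1/2:ℝ)^(n-l)) := by
                refine mul_le_mul_of_nonneg_left ?_ hδ.le
                exact mul_le_mul e1 e2 (by positivity) (by positivity)
    _ = ∫ x in box, δ * ∏ i, k i (x i) := hboxval.symm
    _ ≤ ∫ x in box, g x := step2
    _ ≤ ∫ x in S0, g x := step1
  · -- upper bound
    set p : Fin n → ℝ := fun i => m i * (1 - a) with hp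
    have hpnn : ∀ i, 0 ≤ p i := fun i => mul_nonneg (hm i) (by linarith)
    have hple : ∀ i, p i ≤ m i := fun i => by
      calc p i = m i * (1-a) := rfl
      _ ≤ m i * 1 := mul_le_mul_of_nonneg_left (by linarith) (hm i)
      _ = m i := mul_one _
    have hplt : ∀ i, p i < 1 := fun i => by
      calc p i = m i * (1-a) := rfl
      _ ≤ 1 * (1-a) := mul_le_mul_of_nonneg_right (hm1 i) (by linarith)
      _ < 1 := by linarith
    set h : Fin n → ℝ → ℝ := fun i t => t ^ (-(p i)) with hh
    have hpt : ∀ x ∈ S0, g x ≤ δ^((1:ℝ)-a) * ∏ i, h i (x i) := by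
      intro x hx
      have hP : 0 < ∏ i, x i ^ m i := hPpos x (hsubcube hx)
      have hδP : δ < ∏ i, x i ^ m i := by
        have := hx.2
        rwa [div_lt_one hP] at this
      have key1 : δ ≤ δ^((1:ℝ)-a) * (∏ i, x i ^ m i)^a := by
        have h1 : δ^a ≤ (∏ i, x i ^ m i)^a := Real.rpow_le_rpow hδ.le hδP.le hapos.le
        calc δ = δ ^ (1:ℝ) := (Real.rpow_one δ).symm
        _ = δ^((1:ℝ)-a) * δ^a := by
          rw [← Real.rpow_add hδ]; ring_nf
        _ ≤ δ^((1:ℝ)-a) * (∏ i, x i ^ m i)^a :=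
          mul_le_mul_of_nonneg_left h1 (Real.rpow_nonneg hδ.le _)
      have hProd : (∏ i, x i ^ m i) ^ (a-1) = ∏ i, h i (x i) := by
        rw [← Real.finset_prod_rpow _ _ (fun i _ => Real.rpow_nonneg
          (hx.1 i).1.le _) (a-1)]
        refine Finset.prod_congr rfl fun i _ => ?_
        rw [← Real.rpow_mul (hx.1 i).1.le]
        congr 1
        simp [hp]; ring
      calc g x = δ / ∏ i, x i ^ m i := rfl
      _ ≤ (δ^((1:ℝ)-a) * (∏ i, x i ^ m i)^a) / ∏ i, x i ^ m i := by gcongr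
      _ = δ^((1:ℝ)-a) * (∏ i, x i ^ m i)^(a-1) := by
        rw [Real.rpow_sub hP, Real.rpow_one, mul_div_assoc]
      _ = δ^((1:ℝ)-a) * ∏ i, h i (x i) := by rw [hProd]
    have hHint : IntegrableOn (fun x : Fin n → ℝ => ∏ i, h i (x i)) cube :=
      pi_integrableOn h _ (fun _ => measurableSet_Ioo)
        (fun i => rpow_intOn _ (by linarith [hplt i]))
    have hHval : ∫ x in cube, ∏ i, h i (x i) = ∏ i, (1 - p i)⁻¹ := by
      rw [hcube, pi_setIntegral h _ (fun _ => measurableSet_Ioo)]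
      refine Finset.prod_congr rfl fun i _ => ?_
      rw [hh]
      rw [rpow_val _ (by linarith [hplt i])]
      rw [one_div]
      congr 1
      ring
    have hd : δ^((1:ℝ)-a) = Real.exp 1 * δ := by
      rw [Real.rpow_def_of_pos hδ]
      have h1 : Real.log δ = -L := by rw [hLdef]; ring
      have h2 : Real.log δ * ((1:ℝ)-a) = Real.log δ + 1 := by
        rw [h1, ha]
        field_simp
        ring
      rw [h2, Real.exp_add, Real.exp_log hδ]
      ring
    have hsplit : ∏ i, (1 - p i)⁻¹ ≤ L^l * ∏ i ∈ Finset.univ.filter (fun i => ¬ m i = 1), (1 - m i)⁻¹ := by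
      rw [← Finset.prod_filter_mul_prod_filter_not Finset.univ (fun i => m i = 1) (fun i => (1 - p i)⁻¹)]
      have e1 : ∏ i ∈ Finset.univ.filter (fun i => m i = 1), (1 - p i)⁻¹ = L^l := by
        rw [Finset.prod_congr rfl (fun i hi => ?_), Finset.prod_const, ← hT, ← hlT]
        have hmi : m i = 1 := (Finset.mem_filter.1 hi).2
        have : p i = 1 - a := by simp [hp, hmi]
        rw [this]
        have : (1:ℝ) - (1-a) = a := by ring
        rw [this, ha, one_div, inv_inv]
      have e2 : ∏ i ∈ Finset.univ.filter (fun i => ¬ m i = 1), (1 - p i)⁻¹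
          ≤ ∏ i ∈ Finset.univ.filter (fun i => ¬ m i = 1), (1 - m i)⁻¹ := by
        refine Finset.prod_le_prod (fun i _ => inv_nonneg.2 (by linarith [hplt i])) ?_
        intro i hi
        have hmi : m i ≠ 1 := (Finset.mem_filter.1 hi).2
        have hmi1 : m i < 1 := lt_of_le_of_ne (hm1 i) hmi
        exact inv_anti₀ (by linarith) (by linarith [hple i])
      calc _ ≤ L^l * ∏ i ∈ Finset.univ.filter (fun i => ¬ m i = 1), (1 - p i)⁻¹ := by
            rw [e1]
      _ ≤ _ := mul_le_mul_of_nonneg_left e2 (pow_nonneg hLpos.le l)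
    calc ∫ x in S0, g x ≤ ∫ x in S0, δ^((1:ℝ)-a) * ∏ i, h i (x i) :=
          setIntegral_mono_on hgint ((hHint.mono_set hsubcube).const_mul _) hS0meas hpt
    _ ≤ ∫ x in cube, δ^((1:ℝ)-a) * ∏ i, h i (x i) := by
          refine setIntegral_mono_set (hHint.const_mul _) ?_ (HasSubset.Subset.eventuallyLE hsubcube)
          filter_upwards [ae_restrict_mem hcubemeas] with x hx
          have : 0 ≤ ∏ i, h i (x i) :=
            Finset.prod_nonneg fun i _ => Real.rpow_nonneg (hx i (Set.mem_univ i)).1.le _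
          positivity
    _ = δ^((1:ℝ)-a) * ∏ i, (1 - p i)⁻¹ := by rw [integral_const_mul, hHval]
    _ ≤ δ^((1:ℝ)-a) * (L^l * ∏ i ∈ Finset.univ.filter (fun i => ¬ m i = 1), (1 - m i)⁻¹) :=
          mul_le_mul_of_nonneg_left hsplit (Real.rpow_nonneg hδ.le _)
    _ = (Real.exp 1 * ∏ i ∈ Finset.univ.filter (fun i => ¬ m i = 1), (1 - m i)⁻¹) * |Real.log δ|^l * δ := by
          rw [hd, habs]; ring
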